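/- Fix i ∈ {1,…,d} and assume ⟨μ, v^{(i)}⟩ ≠ 0. Then: (a) the set P^{(i)} = {θ ∈ ℝ^d : γ_k(θ) = 0 for all k ≠ i} equals the line {t·v^{(i)} : t ∈ ℝ}; (b) the point θ^{(i,r)} := Δ_i v^{(i)} is nonzero and satisfies γ(θ^{(i,r)}) = 0 and γ_i(θ^{(i,r)}) = Δ_i; (c) θ^{(i,r)} is the unique nonzero point of {θ ∈ ℝ^d : γ(θ) = 0} ∩ P^{(i)}. -/

import Mathlib

open Matrix

/-- Fix `i` and assume `⟨μ, v⁽ⁱ⁾⟩ ≠ 0`. Then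
(a) `P⁽ⁱ⁾ = {θ : γ_k(θ) = 0 for all k ≠ i}` is the line `{t • v⁽ⁱ⁾}`;
(b) `θ⁽ⁱ'ʳ⁾ := Δ_i • v⁽ⁱ⁾` is nonzero, `γ(θ⁽ⁱ'ʳ⁾) = 0` and `γ_i(θ⁽ⁱ'ʳ⁾) = Δ_i`;
(c) `θ⁽ⁱ'ʳ⁾` is the unique nonzero point of `{γ = 0} ∩ P⁽ⁱ⁾`. -/
theorem statement0 (d : ℕ) (hd : 1 ≤ d)
    (S : Matrix (Fin d) (Fin d) ℝ) (hS : S.PosDef)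
    (μ : Fin d → ℝ) (R : Matrix (Fin d) (Fin d) ℝ) (hR : IsUnit R)
    (Q : Matrix (Fin d) (Fin d) ℝ) (hQ : Q = R⁻¹)
    (v : Fin d → Fin d → ℝ) (hv : ∀ i j, v i j = Q i j)
    (Δ : Fin d → ℝ)
    (hΔ : ∀ i, Δ i = -2 * (μ ⬝ᵥ v i) / (v i ⬝ᵥ S.mulVec (v i)))
    (γ : (Fin d → ℝ) → ℝ)
    (hγ : ∀ θ, γ θ = -(1/2 : ℝ) * (θ ⬝ᵥ S.mulVec θ) - μ ⬝ᵥ θ)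
    (γc : Fin d → (Fin d → ℝ) → ℝ)
    (hγc : ∀ k θ, γc k θ = (fun j => R j k) ⬝ᵥ θ)
    (i : Fin d) (hμv : μ ⬝ᵥ v i ≠ 0) :
    ({θ : Fin d → ℝ | ∀ k, k ≠ i → γc k θ = 0} = {θ : Fin d → ℝ | ∃ t : ℝ, θ = t • v i})
    ∧ (Δ i • v i ≠ 0 ∧ γ (Δ i • v i) = 0 ∧ γc i (Δ i • v i) = Δ i)
    ∧ (∀ θ : Fin d → ℝ, γ θ = 0 → (∀ k, k ≠ i → γc k θ = 0) → θ ≠ 0 → θ = Δ i • v i) := by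
  have hdet := (Matrix.isUnit_iff_isUnit_det R).mp hR
  have hQR : Q * R = 1 := by rw [hQ]; exact Matrix.nonsing_inv_mul R hdet
  have hRQ : R * Q = 1 := by rw [hQ]; exact Matrix.mul_nonsing_inv R hdet
  -- t • v i as a matrix-vector product
  have hvQ : ∀ t : ℝ, t • v i = Qᵀ.mulVec (Pi.single i t) := by
    intro t; funext j
    simp [Matrix.mulVec, dotProduct, hv, Pi.single_apply, mul_comm]
  have hγcm : ∀ k θ, γc k θ = Rᵀ.mulVec θ k := by
    intro k θ; rw [hγc]; simp [Matrix.mulVec, dotProduct]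
  -- Rᵀ applied to t • v i is Pi.single i t
  have hRt : ∀ t : ℝ, Rᵀ.mulVec (t • v i) = Pi.single i t := by
    intro t
    rw [hvQ, Matrix.mulVec_mulVec, ← Matrix.transpose_mul, hQR, Matrix.transpose_one,
      Matrix.one_mulVec]
  -- recover θ from Rᵀ θ
  have hrec : ∀ θ : Fin d → ℝ, Qᵀ.mulVec (Rᵀ.mulVec θ) = θ := by
    intro θ
    rw [Matrix.mulVec_mulVec, ← Matrix.transpose_mul, hRQ, Matrix.transpose_one,
      Matrix.one_mulVec]
  -- part (a)
  have ha : {θ : Fin d → ℝ | ∀ k, k ≠ i → γc k θ = 0}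
      = {θ : Fin d → ℝ | ∃ t : ℝ, θ = t • v i} := by
    ext θ
    simp only [Set.mem_setOf_eq]
    constructor
    · intro h
      refine ⟨γc i θ, ?_⟩
      have hsingle : Rᵀ.mulVec θ = Pi.single i (γc i θ) := by
        funext k
        by_cases hk : k = i
        · subst hk; simp [hγcm]
        · rw [← hγcm, h k hk, Pi.single_apply, if_neg hk]
      have hθ : θ = Qᵀ.mulVec (Pi.single i (γc i θ)) := by rw [← hsingle, hrec]
      exact hθ.trans (hvQ _).symm
    · rintro ⟨t, rfl⟩ k hk
      rw [hγcm, hRt, Pi.single_apply, if_neg hk]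
  have hrec2 : ∀ x : Fin d → ℝ, Rᵀ.mulVec (Qᵀ.mulVec x) = x := by
    intro x
    rw [Matrix.mulVec_mulVec, ← Matrix.transpose_mul, hQR, Matrix.transpose_one,
      Matrix.one_mulVec]
  -- v i ≠ 0
  have hvne : v i ≠ 0 := by
    intro h
    have h1 := hvQ 1
    rw [one_smul, h] at h1
    have h2 : Rᵀ.mulVec (0 : Fin d → ℝ) = Pi.single i 1 := by rw [h1, hrec2]
    rw [Matrix.mulVec_zero] at h2
    have := congrFun h2 i
    simp [Pi.single_apply] at this
  -- positivity
  have hA : 0 < v i ⬝ᵥ S.mulVec (v i) := by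
    have := (Matrix.posDef_iff_dotProduct_mulVec.mp hS).2 hvne
    simpa using this
  have hAne : v i ⬝ᵥ S.mulVec (v i) ≠ 0 := ne_of_gt hA
  have hΔne : Δ i ≠ 0 := by
    rw [hΔ]
    exact div_ne_zero (by simpa using hμv) hAne
  -- γ on the line
  have hγline : ∀ t : ℝ, γ (t • v i)
      = -(1/2) * (t * t * (v i ⬝ᵥ S.mulVec (v i))) - t * (μ ⬝ᵥ v i) := by
    intro t
    rw [hγ]
    rw [Matrix.mulVec_smul, dotProduct_smul, smul_dotProduct,
      dotProduct_smul]
    simp [smul_eq_mul]; ring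
  have hγΔ : γ (Δ i • v i) = 0 := by
    rw [hγline, hΔ]
    field_simp
    ring
  refine ⟨ha, ⟨smul_ne_zero hΔne hvne, hγΔ, ?_⟩, ?_⟩
  · rw [hγcm, hRt]; simp
  · intro θ hγ0 hP hne
    have : θ ∈ {θ : Fin d → ℝ | ∃ t : ℝ, θ = t • v i} := by
      rw [← ha]; exact hP
    obtain ⟨t, rfl⟩ := this
    have ht : t ≠ 0 := by
      intro h; apply hne; rw [h, zero_smul]
    have h0 := hγ0
    rw [hγline] at h0
    have htΔ : t = Δ i := by
      rw [hΔ]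
      field_simp
      have : t * (-(1/2) * (t * (v i ⬝ᵥ S.mulVec (v i))) - (μ ⬝ᵥ v i)) = 0 := by
        linarith [h0]
      rcases mul_eq_zero.mp this with h | h
      · exact absurd h ht
      · nlinarith [h]
    rw [htΔ]
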